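/- Suppose a chord diagram D contains an arc A, disjoint from the rest of the configuration structure, and β is a chord with both endpoints in A, fixed by the reflection involution i of A with i(D)=D. Smooth D at β (the component-increasing smoothing, which is valid since β is even). Then the new unicursal component produced (the one whose endpoints/arcs lie within A on one side of β) shares an even number of vertices with every other unicursal component of the result. Consequently the graph Γ of the smoothed diagram has an isolated vertex and is disconnected (when there is more than one component), so I of such a summand vanishes. -/

import Mathlib

/-- Two chords `c = {c.1, c.2}` and `d = {d.1, d.2}` (each written with smaller
endpoint first) of a chord diagram are *linked* (interleaved) iff the endpoints
of one separate the endpoints of the other on the circle. -/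
def Linked (c d : ℕ × ℕ) : Prop :=
  (c.1 < d.1 ∧ d.1 < c.2 ∧ c.2 < d.2) ∨ (d.1 < c.1 ∧ c.1 < d.2 ∧ d.2 < c.2)

instance : DecidableRel Linked := fun c d => by unfold Linked; infer_instance

/-- A chord diagram on the `N` points `0, …, N-1` of a circle: a finite set of
chords, each recorded as an ordered pair (smaller endpoint, larger endpoint),
forming a perfect matching of `{0, …, N-1}`. -/
structure IsChordDiagram (N : ℕ) (D : Finset (ℕ × ℕ)) : Prop where
  lt : ∀ c ∈ D, c.1 < c.2 ∧ c.2 < N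
  matching : ∀ x < N, ∃! c, c ∈ D ∧ (c.1 = x ∨ c.2 = x)

/-- `x` lies in (the set of points of) the configuration `C`, a finite set of
arcs of the circle, each arc recorded as the interval of points `[A.1, A.2]`. -/
def InConfig (C : Finset (ℕ × ℕ)) (x : ℕ) : Prop :=
  ∃ A ∈ C, A.1 ≤ x ∧ x ≤ A.2

instance (C : Finset (ℕ × ℕ)) : DecidablePred (InConfig C) := fun x => by
  unfold InConfig; infer_instance

/-- The reflection involution of the configuration `C`: reflects each arc of
`C` along its radius and fixes all points outside the arcs. -/
noncomputable def reflectPt (C : Finset (ℕ × ℕ)) (x : ℕ) : ℕ :=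
  ((C.toList.find? fun A => A.1 ≤ x && x ≤ A.2).map fun A => A.1 + A.2 - x).getD x

/-- Rewrite a pair of points as a chord (smaller endpoint first). -/
def sortPair (p : ℕ × ℕ) : ℕ × ℕ := (min p.1 p.2, max p.1 p.2)

/-- The image of a chord under the reflection involution of the configuration. -/
noncomputable def reflectChord (C : Finset (ℕ × ℕ)) (c : ℕ × ℕ) : ℕ × ℕ :=
  sortPair (reflectPt C c.1, reflectPt C c.2)

/-- An even symmetric configuration `C` on the chord diagram `D` (on `N`
points): a finite family of pairwise disjoint arcs of the circle such that
each arc contains an even number of chord endpoints, every chord with one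
endpoint in the arcs has both endpoints in the arcs, and the reflection
involution `i` of the arcs maps the chord diagram to itself, `i(D) = D`. -/
structure EvenSymConfig (N : ℕ) (D : Finset (ℕ × ℕ)) (C : Finset (ℕ × ℕ)) : Prop where
  arcs : ∀ A ∈ C, A.1 ≤ A.2 ∧ A.2 < N
  disj : ∀ A ∈ C, ∀ B ∈ C, A ≠ B → A.2 < B.1 ∨ B.2 < A.1
  even : ∀ A ∈ C,
    Even (((D.biUnion fun c => ({c.1, c.2} : Finset ℕ)).filter
      fun x => A.1 ≤ x ∧ x ≤ A.2).card)
  closed : ∀ c ∈ D, (InConfig C c.1 ↔ InConfig C c.2)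
  symm : ∀ c ∈ D, reflectChord C c ∈ D

/-- The graph `Γ(L)` of a framed 4-valent graph `L`, encoded as a Gauss diagram
on `k` circles: points of the circles are natural numbers, `circleOf` assigns
each point to its circle (unicursal component), and `D` is the set of chords
(each chord an unordered pair of points, recorded as an ordered pair).  The
vertices of `Γ` are the `k` components, and two distinct components are
adjacent iff they share an odd number of chords (intersection points). -/
def gammaGraph (k : ℕ) (circleOf : ℕ → Fin k) (D : Finset (ℕ × ℕ)) :
    SimpleGraph (Fin k) where
  Adj i j := i ≠ j ∧ Odd ((D.filter fun c =>
      (circleOf c.1 = i ∧ circleOf c.2 = j) ∨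
      (circleOf c.1 = j ∧ circleOf c.2 = i)).card)
  symm := by
    constructor
    intro i j hij
    refine ⟨hij.1.symm, ?_⟩
    have heq : (D.filter fun c =>
        (circleOf c.1 = i ∧ circleOf c.2 = j) ∨
        (circleOf c.1 = j ∧ circleOf c.2 = i)) =
      (D.filter fun c =>
        (circleOf c.1 = j ∧ circleOf c.2 = i) ∨
        (circleOf c.1 = i ∧ circleOf c.2 = j)) := by
      apply Finset.filter_congr
      intro c _
      tauto
    rw [← heq]
    exact hij.2
  loopless := ⟨fun i hi => hi.1 rfl⟩

/-- Let `β` be a chord of the diagram `D` lying inside an arc `A` of an even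
symmetric configuration and fixed by the reflection involution `i` of the
configuration.  Smoothing `D` at `β` in the component-increasing way splits the
circle into two components, one of which consists of the points strictly
between the endpoints of `β`.  That new component shares an even number of
vertices (chords) with the other unicursal component — i.e. the number of
chords of `D` with exactly one endpoint strictly between `β.1` and `β.2` is
even — and consequently the graph `Γ` of the smoothed diagram (on the two
components) has an isolated vertex and is disconnected. -/
lemma reflectPt_eq {N : ℕ} {D C : Finset (ℕ × ℕ)} (h : EvenSymConfig N D C)
    {A : ℕ × ℕ} (hA : A ∈ C) {x : ℕ} (hx1 : A.1 ≤ x) (hx2 : x ≤ A.2) :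
    reflectPt C x = A.1 + A.2 - x := by
  unfold reflectPt
  cases hf : C.toList.find? (fun B => B.1 ≤ x && x ≤ B.2) with
  | none =>
    rw [List.find?_eq_none] at hf
    have := hf A (Finset.mem_toList.mpr hA)
    simp [hx1, hx2] at this
  | some B =>
    have hBmem : B ∈ C := Finset.mem_toList.mp (List.mem_of_find?_eq_some hf)
    have hBp := List.find?_some hf
    simp only [Bool.and_eq_true, decide_eq_true_eq] at hBp
    have hBA : B = A := by
      by_contra hne
      rcases h.disj B hBmem A hA hne with h1 | h1 <;> omega
    subst hBA
    simp

theorem stmt_18 (N : ℕ) (D C : Finset (ℕ × ℕ)) (hD : IsChordDiagram N D)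
    (h : EvenSymConfig N D C) (A : ℕ × ℕ) (hA : A ∈ C)
    (β : ℕ × ℕ) (hβ : β ∈ D) (hβA : A.1 ≤ β.1 ∧ β.2 ≤ A.2)
    (hfix : reflectChord C β = β) :
    Even ((D.filter fun c =>
      ((β.1 < c.1 ∧ c.1 < β.2) ∧ ¬ (β.1 < c.2 ∧ c.2 < β.2)) ∨
      (¬ (β.1 < c.1 ∧ c.1 < β.2) ∧ (β.1 < c.2 ∧ c.2 < β.2))).card) ∧
    ¬ (gammaGraph 2 (fun x => if β.1 < x ∧ x < β.2 then 0 else 1)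
        (D.erase β)).Connected := by
  obtain ⟨hA1, hA2⟩ := h.arcs A hA
  obtain ⟨hβlt, hβN⟩ := hD.lt β hβ
  have hβ1A : β.1 ≤ A.2 := le_trans (le_of_lt hβlt) hβA.2
  have hβ2A : A.1 ≤ β.2 := le_trans hβA.1 (le_of_lt hβlt)
  -- the sum of endpoints of β equals A.1 + A.2
  have hsum : β.1 + β.2 = A.1 + A.2 := by
    have r1 : reflectPt C β.1 = A.1 + A.2 - β.1 := reflectPt_eq h hA hβA.1 hβ1A
    have r2 : reflectPt C β.2 = A.1 + A.2 - β.2 := reflectPt_eq h hA hβ2A hβA.2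
    have := hfix
    unfold reflectChord sortPair at this
    rw [r1, r2] at this
    rw [Prod.ext_iff] at this
    simp only at this
    omega
  -- the arc carries an even number of points
  have hIcc : ((D.biUnion fun c => ({c.1, c.2} : Finset ℕ)).filter
      fun x => A.1 ≤ x ∧ x ≤ A.2) = Finset.Icc A.1 A.2 := by
    ext x
    simp only [Finset.mem_filter, Finset.mem_Icc]
    constructor
    · rintro ⟨-, hx⟩; exact hx
    · rintro ⟨hx1, hx2⟩
      refine ⟨?_, hx1, hx2⟩
      obtain ⟨c, ⟨hc, hor⟩, -⟩ := hD.matching x (lt_of_le_of_lt hx2 hA2)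
      simp only [Finset.mem_biUnion, Finset.mem_insert, Finset.mem_singleton]
      exact ⟨c, hc, by omega⟩
  have hAeven : Even ((Finset.Icc A.1 A.2).card) := hIcc ▸ h.even A hA
  rw [Nat.card_Icc] at hAeven
  rw [Nat.even_iff] at hAeven
  -- the interval strictly between the endpoints of β
  set P : ℕ → Prop := fun x => β.1 < x ∧ x < β.2 with hP
  have hPdec : DecidablePred P := fun x => by rw [hP]; infer_instance
  set Q : ℕ × ℕ → Prop := fun c => (P c.1 ∧ ¬ P c.2) ∨ (¬ P c.1 ∧ P c.2) with hQ
  have hUnion : Finset.Ioo β.1 β.2 =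
      D.biUnion (fun c => ({c.1, c.2} : Finset ℕ).filter fun x => P x) := by
    ext x
    simp only [Finset.mem_biUnion, Finset.mem_filter, Finset.mem_Ioo,
      Finset.mem_insert, Finset.mem_singleton, hP]
    constructor
    · rintro ⟨hx1, hx2⟩
      obtain ⟨c, ⟨hc, hor⟩, -⟩ := hD.matching x (by omega)
      exact ⟨c, hc, by omega, hx1, hx2⟩
    · rintro ⟨c, -, -, hx1, hx2⟩
      exact ⟨hx1, hx2⟩
  have hdisj : ∀ c ∈ D, ∀ d ∈ D, c ≠ d →
      Disjoint (({c.1, c.2} : Finset ℕ).filter fun x => P x)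
        (({d.1, d.2} : Finset ℕ).filter fun x => P x) := by
    intro c hc d hd hcd
    rw [Finset.disjoint_left]
    intro x hxc hxd
    simp only [Finset.mem_filter, Finset.mem_insert, Finset.mem_singleton, hP] at hxc hxd
    obtain ⟨e, -, huniq⟩ := hD.matching x (by omega)
    have hce : c = e := huniq c ⟨hc, by omega⟩
    have hde : d = e := huniq d ⟨hd, by omega⟩
    exact hcd (hce.trans hde.symm)
  have hcard : (Finset.Ioo β.1 β.2).card =
      ∑ c ∈ D, (({c.1, c.2} : Finset ℕ).filter fun x => P x).card := by
    rw [hUnion, Finset.card_biUnion hdisj]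
  -- the interval has an even number of points
  have hIooEven : (Finset.Ioo β.1 β.2).card % 2 = 0 := by
    rw [Nat.card_Ioo]; omega
  -- termwise parity
  have key : ∀ c ∈ D,
      ((({c.1, c.2} : Finset ℕ).filter fun x => P x).card
        + (if Q c then 1 else 0)) % 2 = 0 := by
    intro c hc
    have hlt := (hD.lt c hc).1
    have hne : c.1 ≠ c.2 := ne_of_lt hlt
    have hfi : (({c.1, c.2} : Finset ℕ).filter fun x => P x) =
        ({c.1, c.2} : Finset ℕ).filter fun x => β.1 < x ∧ x < β.2 := by
      apply Finset.filter_congr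
      intro x _
      rw [hP]
    rw [hfi]
    simp only [hQ, hP]
    by_cases h1 : β.1 < c.1 ∧ c.1 < β.2 <;> by_cases h2 : β.1 < c.2 ∧ c.2 < β.2
    · rw [Finset.filter_insert, if_pos h1, Finset.filter_singleton, if_pos h2,
        if_neg (by tauto), Finset.card_insert_of_notMem (by simp [hne]),
        Finset.card_singleton]
    · rw [Finset.filter_insert, if_pos h1, Finset.filter_singleton, if_neg h2,
        if_pos (by tauto), Finset.card_insert_of_notMem (by simp),
        Finset.card_empty]
    · rw [Finset.filter_insert, if_neg h1, Finset.filter_singleton, if_pos h2,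
        if_pos (by tauto), Finset.card_singleton]
    · rw [Finset.filter_insert, if_neg h1, Finset.filter_singleton, if_neg h2,
        if_neg (by tauto), Finset.card_empty]
  have hsum2 : (∑ c ∈ D, ((({c.1, c.2} : Finset ℕ).filter fun x => P x).card
      + (if Q c then 1 else 0))) % 2 = 0 := by
    rw [Finset.sum_nat_mod]
    rw [Finset.sum_congr rfl key]
    simp
  rw [Finset.sum_add_distrib] at hsum2
  have hQcard : (D.filter Q).card = ∑ c ∈ D, (if Q c then 1 else 0) := by
    rw [Finset.card_filter]
  have hQβ : ¬ Q β := by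
    simp only [hQ, hP]
    omega
  have hEvenQ : Even ((D.filter Q).card) := by
    rw [Nat.even_iff, hQcard]
    omega
  constructor
  · convert hEvenQ using 2
    ext c
    simp only [Finset.mem_filter, hQ, hP]
  · intro hconn
    have hedge : ∀ (G : SimpleGraph (Fin 2)) {u v : Fin 2} (_ : G.Walk u v),
        u ≠ v → G.Adj 0 1 := by
      intro G u v w
      induction w with
      | nil => intro hne; exact absurd rfl hne
      | @cons a b c hadj p ih =>
        intro _
        have hb : a ≠ b := hadj.ne
        have hcases : ∀ x y : Fin 2, x ≠ y → (x = 0 ∧ y = 1) ∨ (x = 1 ∧ y = 0) := by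
          decide
        rcases hcases _ _ hb with ⟨h1, h2⟩ | ⟨h1, h2⟩
        · exact h1 ▸ h2 ▸ hadj
        · exact (h1 ▸ h2 ▸ hadj).symm
    obtain ⟨w⟩ := hconn.preconnected (0 : Fin 2) 1
    have hadj01 := hedge _ w (by decide)
    obtain ⟨-, hodd⟩ := (hadj01 : _ ∧ _)
    have hodd' : Odd ((D.filter Q).card) := by
      convert hodd using 2
      ext c
      simp only [Finset.mem_filter, Finset.mem_erase, hQ, hP]
      constructor
      · rintro ⟨hcD, hQc⟩
        have hcβ : c ≠ β := by
          rintro rfl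
          omega
        refine ⟨⟨hcβ, hcD⟩, ?_⟩
        by_cases h1 : β.1 < c.1 ∧ c.1 < β.2 <;>
          by_cases h2 : β.1 < c.2 ∧ c.2 < β.2 <;>
          simp [h1, h2] at hQc ⊢
      · rintro ⟨⟨-, hcD⟩, hpred⟩
        refine ⟨hcD, ?_⟩
        by_cases h1 : β.1 < c.1 ∧ c.1 < β.2 <;>
          by_cases h2 : β.1 < c.2 ∧ c.2 < β.2 <;>
          simp [h1, h2] at hpred ⊢
    rw [Nat.even_iff] at hEvenQ
    rw [Nat.odd_iff] at hodd'
    omega
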